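/- Let η be a holomorphic connection on the holomorphic principal H-bundle E_H, and let 𝜂̃ : X × 𝔤 → At_ρ(E_H) be the holomorphic G-connection defined by (x, v) ↦ (η(d'ρ(x, v)), (x, v)). Then η is strongly adapted to 𝜂̃ if and only if for all v ∈ 𝔤 and all x ∈ X the contraction i_{d'ρ(x,v)}(𝒦(η)(x)) ∈ (T^*X ⊗ ad(E_H))_x of the curvature 𝒦(η)(x) by the tangent vector d'ρ(x, v) ∈ T_x X vanishes. -/
import Mathlib


/-!
STATEMENT 4 (Lemma 2 of "Equivariant bundles and adapted connections").

Sections-level model of the setting of the paper.  `X` is a connected complex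
manifold, `H` a complex Lie group, `p : E_H → X` a holomorphic principal
`H`-bundle, and `G` a connected complex Lie group with Lie algebra `𝔤` acting
holomorphically on `X` via `ρ`.  We encode:

* `R` = the ring `O(X)` of holomorphic functions on `X`;
* `T` = the holomorphic sections of `TX` (an `R`-module and complex Lie algebra);
* `A` = the holomorphic sections of the Atiyah bundle `At(E_H) = (TE_H)/H`,
  i.e. the `H`-invariant holomorphic vector fields on `E_H`, with its Lie bracket;
* `adE` = the holomorphic sections of `ad(E_H)`;
* `ι : adE → A` and `dp : A → T` give the (sections of the) Atiyah exact sequence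
  `0 → ad(E_H) → At(E_H) → TX → 0`; `dp` intertwines the Lie brackets;
* `σ : 𝔤 → T`, `σ v = d'ρ(·, v)`, is the infinitesimal action of `𝔤` on `X`;
* a holomorphic connection on `E_H` is an `R`-linear (i.e. `O_X`-linear)
  splitting `η : T →ₗ[R] A` of `dp`, and its curvature `𝒦(η)` is determined by
  `𝒦(η)(v, w) = ⁅η v, η w⁆ - η ⁅v, w⁆` (a vertical, i.e. `ad(E_H)`-valued, term);
* the `G`-connection `η̃ : X × 𝔤 → At_ρ(E_H)`, `(x, v) ↦ (η (d'ρ(x,v)), (x,v))`,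
  has `J ∘ η̃ (v) = η (σ v)`;
* a section `a ∈ A` lies pointwise in a subbundle `W ⊆ At(E_H)` which is the
  image of an `O_X`-linear splitting exactly when `a` lies in the image of that
  splitting on sections; in particular, `η` is *adapted* to a `G`-connection `h`
  iff `⁅J(h v), η t⁆ ∈ image η` for all `v ∈ 𝔤`, `t ∈ T`, and *strongly adapted*
  iff moreover `J (h v) ∈ image η` for all `v ∈ 𝔤`;
* the contraction `i_{d'ρ(x,v)} (𝒦(η)(x))` vanishes for all `x ∈ X` exactly when
  `𝒦(η)(σ v, t) = ⁅η (σ v), η t⁆ - η ⁅σ v, t⁆ = 0` for all vector fields `t`.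

Lemma 2: `η` is strongly adapted to `η̃` iff `i_{d'ρ(x,v)}(𝒦(η)(x)) = 0` for all
`v ∈ 𝔤` and `x ∈ X`.
-/
theorem strongly_adapted_to_etaTilde_iff_contraction_of_curvature_vanishes
    (R : Type) [CommRing R] [Algebra ℂ R]
    (T : Type) [LieRing T] [LieAlgebra ℂ T] [Module R T]
    (A : Type) [LieRing A] [LieAlgebra ℂ A] [Module R A]
    (adE : Type) [AddCommGroup adE] [Module R adE]
    (𝔤 : Type) [LieRing 𝔤] [LieAlgebra ℂ 𝔤]
    -- the Atiyah exact sequence 0 → ad(E_H) → At(E_H) → TX → 0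
    (ι : adE →ₗ[R] A) (dp : A →ₗ[R] T)
    (hι : Function.Injective ι) (hdp : Function.Surjective dp)
    (hexact : ∀ a : A, dp a = 0 ↔ a ∈ LinearMap.range ι)
    (hdp_bracket : ∀ a b : A, dp ⁅a, b⁆ = ⁅dp a, dp b⁆)
    -- the infinitesimal action of 𝔤 = Lie(G) on X
    (σ : 𝔤 →ₗ[ℂ] T) (hσ : ∀ v w : 𝔤, σ ⁅v, w⁆ = ⁅σ v, σ w⁆)
    -- a holomorphic connection η on E_H
    (η : T →ₗ[R] A) (hη : ∀ t, dp (η t) = t) :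
    -- η is strongly adapted to the G-connection η̃ : v ↦ (η (σ v), v), i.e. η is
    -- adapted to η̃ and the image of J ∘ η̃ is contained in the image of η ...
    ((∀ (v : 𝔤) (t : T), ⁅η (σ v), η t⁆ ∈ LinearMap.range η) ∧
        (∀ v : 𝔤, η (σ v) ∈ LinearMap.range η)) ↔
      -- ... iff the contraction of the curvature 𝒦(η) by d'ρ(·, v) vanishes for
      -- every v ∈ 𝔤 (at every point of X)
      (∀ (v : 𝔤) (t : T), ⁅η (σ v), η t⁆ - η ⁅σ v, t⁆ = 0) := by
  constructor
  · rintro ⟨h1, -⟩ v t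
    obtain ⟨s, hs⟩ := h1 v t
    have : s = ⁅σ v, t⁆ := by
      have := congrArg dp hs
      rw [hη, hdp_bracket, hη, hη] at this
      exact this
    rw [← hs, this, sub_self]
  · intro h
    refine ⟨fun v t => ⟨⁅σ v, t⁆, ?_⟩, fun v => ⟨σ v, rfl⟩⟩
    exact (sub_eq_zero.mp (h v t)).symm
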